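/- Let X = {x_1,...,x_d} be a positive basis of a full-rank lattice L ⊂ R^d such that no d−1 elements of X lie in a coordinate hyperplane and X is not orthogonal. Then there exist linearly independent primitive gaps z_1,...,z_d ∈ G_pr(X), given by z_i = a_i·Σ_{j≠i} x_j − x_i with a_i = max_k ⌊x_{ik} / Σ_{j≠i} x_{jk}⌋ + 1, whose sup-norms satisfy |z_i| = max_m { a_i·Σ_{j≠i} x_{jm} − x_{im} }. -/

import Mathlib

/-- Let `X = {x_1,…,x_d}` be a positive basis of a full-rank lattice `L ⊂ ℝ^d`, not
orthogonal, and such that no `d-1` of its elements lie in a coordinate hyperplane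
(so `∑_{j≠i} x_{jk} > 0` for all `i,k`). With
`a_i = max_k ⌊x_{ik} / ∑_{j≠i} x_{jk}⌋ + 1` and `z_i = a_i ∑_{j≠i} x_j − x_i`, the
`z_1,…,z_d` are linearly independent primitive gaps of `S(X)` in `L⁺`, with sup-norms
`|z_i| = max_m (a_i ∑_{j≠i} x_{jm} − x_{im})`. -/
theorem small_primitive_gaps (d : ℕ) (hd : 0 < d) (x : Fin d → Fin d → ℝ)
    (hli : LinearIndependent ℝ x) (hpos : ∀ i j, 0 ≤ x i j)
    (hhyp : ∀ i k, 0 < ∑ j ∈ Finset.univ.erase i, x j k)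
    (hnotorth : ¬ ∀ i, ∃ j, ∃ c : ℝ, x i = c • (Pi.single j 1 : Fin d → ℝ)) :
    let L : Set (Fin d → ℝ) := {v | ∃ a : Fin d → ℤ, v = ∑ i, (a i : ℝ) • x i}
    let S : Set (Fin d → ℝ) := {v | ∃ a : Fin d → ℕ, v = ∑ i, (a i : ℝ) • x i}
    let a : Fin d → ℤ := fun i =>
      (⨆ k : Fin d, ⌊x i k / ∑ j ∈ Finset.univ.erase i, x j k⌋) + 1
    let z : Fin d → Fin d → ℝ := fun i =>
      ((a i : ℝ) • ∑ j ∈ Finset.univ.erase i, x j) - x i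
    LinearIndependent ℝ z ∧ ∀ i,
      z i ∈ L ∧ (∀ k, 0 ≤ z i k) ∧ z i ∉ S ∧
        (∀ w ∈ L, ∀ m : ℤ, 1 < m → z i ≠ (m : ℝ) • w) ∧
        ‖z i‖ = ⨆ m : Fin d, ((a i : ℝ) * ∑ j ∈ Finset.univ.erase i, x j m - x i m) := by
  intro L S a z
  haveI : Nonempty (Fin d) := ⟨⟨0, hd⟩⟩
  -- d ≥ 2
  have hd2 : 2 ≤ d := by
    by_contra h
    have hd1 : d = 1 := by omega
    subst hd1
    have := hhyp 0 0
    have he : (Finset.univ.erase (0 : Fin 1)) = ∅ := by decide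
    rw [he] at this
    simp at this
  -- abbreviation for the coordinate sums
  set s : Fin d → Fin d → ℝ := fun i k => ∑ j ∈ Finset.univ.erase i, x j k with hs
  have hspos : ∀ i k, 0 < s i k := hhyp
  -- floor bounds
  have hfloor_le : ∀ i k, ⌊x i k / s i k⌋ + 1 ≤ a i := by
    intro i k
    have : ⌊x i k / s i k⌋ ≤ ⨆ k : Fin d, ⌊x i k / s i k⌋ :=
      le_ciSup (f := fun k => ⌊x i k / s i k⌋) (Set.finite_range _).bddAbove k
    exact add_le_add_left this 1
  have ha1 : ∀ i, 1 ≤ a i := by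
    intro i
    have h0 : (0 : ℤ) ≤ ⌊x i (Classical.arbitrary (Fin d)) / s i (Classical.arbitrary (Fin d))⌋ :=
      Int.floor_nonneg.mpr (div_nonneg (hpos _ _) (hspos _ _).le)
    have := hfloor_le i (Classical.arbitrary (Fin d))
    omega
  -- coordinates of z
  have hzeq : ∀ i k, z i k = (a i : ℝ) * s i k - x i k := by
    intro i k
    simp [z, s, Finset.sum_apply]
  have hzpos : ∀ i k, 0 < z i k := by
    intro i k
    rw [hzeq]
    have h1 : x i k / s i k < (a i : ℝ) := by
      have := hfloor_le i k
      have h2 : x i k / s i k < (⌊x i k / s i k⌋ : ℝ) + 1 := Int.lt_floor_add_one _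
      have h3 : ((⌊x i k / s i k⌋ : ℝ) + 1) ≤ (a i : ℝ) := by exact_mod_cast this
      linarith
    have := (div_lt_iff₀ (hspos i k)).mp h1
    linarith
  -- integral representation of z in the basis x
  set b : Fin d → Fin d → ℤ := fun i j => if j = i then -1 else a i with hbdef
  have hb : ∀ i, z i = ∑ j, (b i j : ℝ) • x j := by
    intro i
    rw [← Finset.add_sum_erase _ _ (Finset.mem_univ i)]
    have h1 : ∑ j ∈ Finset.univ.erase i, (b i j : ℝ) • x j
        = (a i : ℝ) • ∑ j ∈ Finset.univ.erase i, x j := by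
      rw [Finset.smul_sum]
      refine Finset.sum_congr rfl fun j hj => ?_
      have : j ≠ i := (Finset.mem_erase.mp hj).1
      simp [b, this]
    rw [h1]
    simp only [b, if_pos rfl, z]
    push_cast
    module
  -- uniqueness of coefficients
  have huniq : ∀ c c' : Fin d → ℝ, ∑ i, c i • x i = ∑ i, c' i • x i → ∀ i, c i = c' i := by
    intro c c' h i
    have h0 : ∑ j, (c j - c' j) • x j = 0 := by
      simp [sub_smul, Finset.sum_sub_distrib, h]
    have := Fintype.linearIndependent_iff.mp hli _ h0 i
    linarith [this]
  -- a_i ≥ 2 for some i when d = 2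
  have hsumgt : (1 : ℝ) < ∑ i, (a i : ℝ) / ((a i : ℝ) + 1) := by
    have hA1 : ∀ i, (1 : ℝ) ≤ (a i : ℝ) := fun i => by exact_mod_cast ha1 i
    have hAp : ∀ i, (0 : ℝ) < (a i : ℝ) + 1 := fun i => by linarith [hA1 i]
    have hhalf : ∀ i, (1 : ℝ) / 2 ≤ (a i : ℝ) / ((a i : ℝ) + 1) := by
      intro i
      rw [div_le_div_iff₀ (by norm_num) (hAp i)]
      linarith [hA1 i]
    rcases Nat.lt_or_ge d 3 with h3 | h3
    · -- d = 2
      have hd2' : d = 2 := by omega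
      -- claim: some a i ≥ 2
      have hex : ∃ i, 2 ≤ a i := by
        by_contra hno
        push_neg at hno
        have hall : ∀ i, a i = 1 := by
          intro i
          have h1 := hno i
          have h2 := ha1 i
          omega
        have hlt : ∀ i k, x i k < s i k := by
          intro i k
          have hfl : ⌊x i k / s i k⌋ + 1 ≤ 1 := by
            have h := hfloor_le i k
            rw [hall i] at h
            exact h
          have h2 : x i k / s i k < (⌊x i k / s i k⌋ : ℝ) + 1 := Int.lt_floor_add_one _
          have h3 : ((⌊x i k / s i k⌋ : ℝ) + 1) ≤ 1 := by exact_mod_cast hfl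
          have : x i k / s i k < 1 := by linarith
          have := (div_lt_one (hspos i k)).mp this
          linarith
        have k0 : Fin d := Classical.arbitrary (Fin d)
        have hT : ∀ i, s i k0 = (∑ j, x j k0) - x i k0 := by
          intro i
          simp [s, Finset.sum_erase_eq_sub (Finset.mem_univ i)]
        have hsum : ∑ i, x i k0 < ∑ i, s i k0 :=
          Finset.sum_lt_sum_of_nonempty Finset.univ_nonempty (fun i _ => hlt i k0)
        rw [Finset.sum_congr rfl (fun i _ => hT i)] at hsum
        rw [Finset.sum_sub_distrib] at hsum
        simp only [Finset.sum_const, Finset.card_univ, Fintype.card_fin, hd2'] at hsum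
        have : (2 : ℕ) • (∑ j, x j k0) = 2 * ∑ j, x j k0 := by
          simp [nsmul_eq_mul]
        linarith [hsum, this]
      obtain ⟨i0, hi0⟩ := hex
      have h23 : (2 : ℝ) / 3 ≤ (a i0 : ℝ) / ((a i0 : ℝ) + 1) := by
        have : (2 : ℝ) ≤ (a i0 : ℝ) := by exact_mod_cast hi0
        rw [div_le_div_iff₀ (by norm_num) (hAp i0)]
        linarith
      have hsplit : ∑ i, (a i : ℝ) / ((a i : ℝ) + 1)
          = (a i0 : ℝ) / ((a i0 : ℝ) + 1)
            + ∑ i ∈ Finset.univ.erase i0, (a i : ℝ) / ((a i : ℝ) + 1) :=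
        (Finset.add_sum_erase _ _ (Finset.mem_univ i0)).symm
      have hcard : (Finset.univ.erase i0).card = 1 := by
        rw [Finset.card_erase_of_mem (Finset.mem_univ i0)]
        simp [hd2']
      have hrest : ((Finset.univ.erase i0).card : ℝ) * (1 / 2)
          ≤ ∑ i ∈ Finset.univ.erase i0, (a i : ℝ) / ((a i : ℝ) + 1) := by
        calc ((Finset.univ.erase i0).card : ℝ) * (1 / 2)
            = ∑ _i ∈ Finset.univ.erase i0, (1 : ℝ) / 2 := by
              rw [Finset.sum_const, nsmul_eq_mul]
          _ ≤ _ := Finset.sum_le_sum fun i _ => hhalf i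
      rw [hcard] at hrest
      rw [hsplit]
      push_cast at hrest
      linarith
    · -- d ≥ 3
      have : ((d : ℝ)) * (1 / 2) ≤ ∑ i, (a i : ℝ) / ((a i : ℝ) + 1) := by
        calc ((d : ℝ)) * (1 / 2) = ∑ _i : Fin d, (1 : ℝ) / 2 := by
              simp [Finset.sum_const, Finset.card_univ, nsmul_eq_mul]
          _ ≤ _ := Finset.sum_le_sum fun i _ => hhalf i
      have hd3 : (3 : ℝ) ≤ (d : ℝ) := by exact_mod_cast h3
      linarith
  -- linear independence of z
  have hliz : LinearIndependent ℝ z := by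
    rw [Fintype.linearIndependent_iff]
    intro c hc
    have hrw : ∑ i, c i • z i = ∑ j, (∑ i, c i * (b i j : ℝ)) • x j := by
      calc ∑ i, c i • z i = ∑ i, ∑ j, (c i * (b i j : ℝ)) • x j := by
            refine Finset.sum_congr rfl fun i _ => ?_
            rw [hb i, Finset.smul_sum]
            refine Finset.sum_congr rfl fun j _ => ?_
            rw [smul_smul]
        _ = ∑ j, ∑ i, (c i * (b i j : ℝ)) • x j := Finset.sum_comm
        _ = ∑ j, (∑ i, c i * (b i j : ℝ)) • x j := by
            refine Finset.sum_congr rfl fun j _ => ?_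
            rw [Finset.sum_smul]
    rw [hrw] at hc
    have hcoef : ∀ j, ∑ i, c i * (b i j : ℝ) = 0 := by
      intro j
      have := huniq _ (fun _ => 0) (by simpa using hc) j
      simpa using this
    -- rewrite coefficient equation
    set t : ℝ := ∑ i, c i * (a i : ℝ) with ht
    have hceq : ∀ j, t = c j * ((a j : ℝ) + 1) := by
      intro j
      have h0 := hcoef j
      have hsplit : ∑ i, c i * (b i j : ℝ)
          = c j * (b j j : ℝ) + ∑ i ∈ Finset.univ.erase j, c i * (b i j : ℝ) :=
        (Finset.add_sum_erase _ _ (Finset.mem_univ j)).symm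
      have h1 : ∑ i ∈ Finset.univ.erase j, c i * (b i j : ℝ)
          = ∑ i ∈ Finset.univ.erase j, c i * (a i : ℝ) := by
        refine Finset.sum_congr rfl fun i hi => ?_
        have hij : i ≠ j := (Finset.mem_erase.mp hi).1
        simp [b, hij.symm]
      have h2 : ∑ i ∈ Finset.univ.erase j, c i * (a i : ℝ)
          = t - c j * (a j : ℝ) := by
        rw [ht, Finset.sum_erase_eq_sub (Finset.mem_univ j)]
      have h3 : (b j j : ℝ) = -1 := by simp [b]
      rw [hsplit, h1, h2, h3] at h0
      linarith
    have hAp : ∀ i, (0 : ℝ) < (a i : ℝ) + 1 := by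
      intro i
      have : (1 : ℝ) ≤ (a i : ℝ) := by exact_mod_cast ha1 i
      linarith
    have hcval : ∀ j, c j = t / ((a j : ℝ) + 1) := fun j =>
      (eq_div_iff (hAp j).ne').mpr (hceq j).symm
    have ht0 : t = 0 := by
      by_contra ht0
      have : t = t * ∑ i, (a i : ℝ) / ((a i : ℝ) + 1) := by
        calc t = ∑ i, c i * (a i : ℝ) := ht
          _ = ∑ i, t * ((a i : ℝ) / ((a i : ℝ) + 1)) := by
              refine Finset.sum_congr rfl fun i _ => ?_
              rw [hcval i]
              field_simp
          _ = t * ∑ i, (a i : ℝ) / ((a i : ℝ) + 1) := by rw [Finset.mul_sum]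
      have h1 : ∑ i, (a i : ℝ) / ((a i : ℝ) + 1) = 1 := by
        have h2 : t * 1 = t * ∑ i, (a i : ℝ) / ((a i : ℝ) + 1) := by
          rw [mul_one]; exact this
        exact (mul_left_cancel₀ ht0 h2).symm
      linarith [hsumgt]
    intro i
    rw [hcval i, ht0, zero_div]
  refine ⟨hliz, fun i => ?_⟩
  refine ⟨⟨b i, hb i⟩, fun k => (hzpos i k).le, ?_, ?_, ?_⟩
  · -- z i ∉ S
    rintro ⟨n, hn⟩
    have := huniq (fun j => (n j : ℝ)) (fun j => (b i j : ℝ)) (by rw [← hn, hb i]) i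
    simp [b] at this
    have hn0 : (0 : ℝ) ≤ (n i : ℝ) := Nat.cast_nonneg _
    linarith
  · -- primitivity
    rintro w ⟨bw, rfl⟩ m hm heq
    have hmw : (m : ℝ) • ∑ j, (bw j : ℝ) • x j = ∑ j, ((m * bw j : ℤ) : ℝ) • x j := by
      rw [Finset.smul_sum]
      refine Finset.sum_congr rfl fun j _ => ?_
      rw [smul_smul]
      push_cast
      ring_nf
    rw [hmw] at heq
    have := huniq (fun j => (b i j : ℝ)) (fun j => ((m * bw j : ℤ) : ℝ)) (by rw [← hb i, heq]) i
    have hZ : b i i = m * bw i := by exact_mod_cast this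
    have hbi : b i i = -1 := by simp [b]
    have hdvd : m ∣ -1 := ⟨bw i, by omega⟩
    have := Int.le_of_dvd (by norm_num) hdvd.neg_right
    omega
  · -- norm
    have key : ∀ m : Fin d, (a i : ℝ) * ∑ j ∈ Finset.univ.erase i, x j m - x i m = z i m := by
      intro m
      rw [hzeq i m]
    have hbdd : BddAbove (Set.range fun m : Fin d =>
        (a i : ℝ) * ∑ j ∈ Finset.univ.erase i, x j m - x i m) :=
      (Set.finite_range _).bddAbove
    apply le_antisymm
    · have h0 : (0 : ℝ) ≤ ⨆ m : Fin d, ((a i : ℝ) * ∑ j ∈ Finset.univ.erase i, x j m - x i m) := by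
        have := le_ciSup hbdd (Classical.arbitrary (Fin d))
        have h2 := hzpos i (Classical.arbitrary (Fin d))
        rw [← key (Classical.arbitrary (Fin d))] at h2
        linarith
      rw [pi_norm_le_iff_of_nonneg h0]
      intro m
      have : ‖z i m‖ = z i m := Real.norm_of_nonneg (hzpos i m).le
      rw [this, ← key m]
      exact le_ciSup hbdd m
    · apply ciSup_le
      intro m
      rw [key m]
      calc z i m ≤ ‖z i m‖ := le_abs_self _
        _ ≤ ‖z i‖ := norm_le_pi_norm _ m
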